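/- A complete multipartite graph G with p ≥ 2 parts has exactly three distinct adjacency eigenvalues if and only if G is complete bipartite (with both parts nonempty and not both singletons) or G ≅ K_{t,...,t} with p ≥ 3 equal parts of size t ≥ 2. -/

import Mathlib

open Matrix Finset

lemma mem_image_eigenvalues_iff {n : Type*} [Fintype n] [DecidableEq n] {A : Matrix n n ℝ}
    (hA : A.IsHermitian) (x : ℝ) :
    x ∈ Finset.univ.image hA.eigenvalues ↔ ∃ v : n → ℝ, v ≠ 0 ∧ A *ᵥ v = x • v := by
  constructor
  · rintro hx
    obtain ⟨j, -, rfl⟩ := Finset.mem_image.1 hx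
    refine ⟨⇑(hA.eigenvectorBasis j), ?_, hA.mulVec_eigenvectorBasis j⟩
    intro h
    have := hA.eigenvectorBasis.orthonormal.ne_zero j
    apply this
    ext i
    exact congrFun h i
  · rintro ⟨v, hv, hAv⟩
    by_contra hx
    apply hv
    have key : ∀ j, ⇑(hA.eigenvectorBasis j) ⬝ᵥ v = 0 := by
      intro j
      have h1 : ⇑(hA.eigenvectorBasis j) ⬝ᵥ (A *ᵥ v) = x * (⇑(hA.eigenvectorBasis j) ⬝ᵥ v) := by
        rw [hAv, dotProduct_smul]; rfl
      have h2 : ⇑(hA.eigenvectorBasis j) ⬝ᵥ (A *ᵥ v)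
          = hA.eigenvalues j * (⇑(hA.eigenvectorBasis j) ⬝ᵥ v) := by
        rw [dotProduct_mulVec, ← mulVec_transpose]
        have ht : Aᵀ = A := by
          have := hA.eq
          rwa [conjTranspose_eq_transpose_of_trivial] at this
        rw [ht, hA.mulVec_eigenvectorBasis, smul_dotProduct]
        rfl
      have hne : hA.eigenvalues j ≠ x := by
        intro h; exact hx (Finset.mem_image.2 ⟨j, Finset.mem_univ _, h⟩)
      have := h1.symm.trans h2
      rcases mul_eq_mul_right_iff.1 this.symm with h | h
      · exact absurd h hne
      · exact h
    -- now v = 0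
    set w : EuclideanSpace ℝ n := (WithLp.equiv 2 _).symm v with hw
    have hw0 : w = 0 := by
      have := hA.eigenvectorBasis.repr.injective
      apply this
      simp only [map_zero]
      ext j
      rw [hA.eigenvectorBasis.repr_apply_apply]
      simp only [PiLp.inner_apply, RCLike.inner_apply, map_zero]
      rw [show ∑ i, w i * (starRingEnd ℝ) (hA.eigenvectorBasis j i)
          = ⇑(hA.eigenvectorBasis j) ⬝ᵥ v by simp [dotProduct, hw, mul_comm], key j]
      rfl
    ext i
    exact congrFun (congrArg (WithLp.equiv 2 _) hw0) i

variable {p : ℕ} (nn : Fin p → ℕ)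

noncomputable def Mp : Matrix (Σ i : Fin p, Fin (nn i)) (Σ i : Fin p, Fin (nn i)) ℝ :=
  fun x y => if x.1 = y.1 then 0 else 1

noncomputable def gf (x : ℝ) : ℝ := ∑ i, (nn i : ℝ) / (x + nn i)

lemma mulVec_Mp (v : (Σ i : Fin p, Fin (nn i)) → ℝ) (x : Σ i : Fin p, Fin (nn i)) :
    (Mp nn *ᵥ v) x = (∑ j, ∑ a, v ⟨j, a⟩) - ∑ a, v ⟨x.1, a⟩ := by
  have : (Mp nn *ᵥ v) x = ∑ y : Σ i : Fin p, Fin (nn i), (v y - if x.1 = y.1 then v y else 0) := by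
    simp only [mulVec, dotProduct, Mp]
    congr 1; ext y
    by_cases h : x.1 = y.1 <;> simp [h]
  rw [this, Finset.sum_sub_distrib]
  congr 1
  · rw [← Finset.univ_sigma_univ, Finset.sum_sigma]
  · rw [← Finset.univ_sigma_univ, Finset.sum_sigma]
    rw [Finset.sum_eq_single x.1]
    · simp
    · intro b _ hb
      simp [Ne.symm hb]
    · intro h
      exact absurd (Finset.mem_univ _) h

def Pspec (x : ℝ) : Prop :=
  (x = 0 ∧ ∃ i, 2 ≤ nn i)
  ∨ (∃ i j, i ≠ j ∧ nn i = nn j ∧ x = -(nn i : ℝ))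
  ∨ ((∀ i, x + (nn i : ℝ) ≠ 0) ∧ gf nn x = 1)

lemma eigen_iff (hp : 2 ≤ p) (hpos : ∀ i, 1 ≤ nn i) (x : ℝ) :
    (∃ v, v ≠ 0 ∧ Mp nn *ᵥ v = x • v) ↔ Pspec nn x := by
  have hne : ∀ i : Fin p, Nonempty (Fin (nn i)) := fun i => ⟨⟨0, hpos i⟩⟩
  constructor
  · rintro ⟨v, hv, hAv⟩
    set T : Fin p → ℝ := fun i => ∑ a, v ⟨i, a⟩ with hT
    set S : ℝ := ∑ i, T i with hS
    have hkey : ∀ y : Σ i : Fin p, Fin (nn i), x * v y = S - T y.1 := by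
      intro y
      have h := congrFun hAv y
      rw [mulVec_Mp] at h
      rw [hS]
      simp only [hT]
      rw [h]
      rfl
    by_cases hx : x = 0
    · left
      refine ⟨hx, ?_⟩
      by_contra hbig
      push_neg at hbig
      have h1 : ∀ i, nn i = 1 := fun i =>
        le_antisymm (Nat.lt_succ_iff.mp (hbig i)) (hpos i)
      have hTS : ∀ i, T i = S := by
        intro i
        obtain ⟨a⟩ := hne i
        have := hkey ⟨i, a⟩
        rw [hx, zero_mul] at this
        linarith
      have hS0 : S = 0 := by
        have hsum : ∑ i : Fin p, T i = (p : ℝ) * S := by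
          rw [Finset.sum_congr rfl (fun i _ => hTS i), Finset.sum_const,
            Finset.card_univ, Fintype.card_fin, nsmul_eq_mul]
        have h2 : S = (p : ℝ) * S := hS.trans hsum
        have hp1 : (1 : ℝ) < (p : ℝ) := by exact_mod_cast hp.trans_lt' one_lt_two
        nlinarith
      apply hv
      funext y
      obtain ⟨i, a⟩ := y
      have hsub : Subsingleton (Fin (nn i)) := by rw [h1 i]; infer_instance
      have h3 : T i = v ⟨i, a⟩ := by
        rw [hT]
        haveI := hsub
        exact Fintype.sum_subsingleton _ a
      rw [Pi.zero_apply, ← h3, hTS, hS0]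
    · -- x ≠ 0, v constant on parts
      set c : Fin p → ℝ := fun i => (S - T i) / x with hc
      have hvc : ∀ y : Σ i : Fin p, Fin (nn i), v y = c y.1 := by
        intro y
        rw [hc]
        field_simp
        linarith [hkey y]
      have hTc : ∀ i, T i = (nn i : ℝ) * c i := by
        intro i
        rw [hT]
        simp only [hvc]
        rw [Finset.sum_const, Finset.card_univ, Fintype.card_fin, nsmul_eq_mul]
      have hSc : S = ∑ j, (nn j : ℝ) * c j := by
        rw [hS, Finset.sum_congr rfl (fun j _ => hTc j)]
      have heq : ∀ i, c i * (x + (nn i : ℝ)) = S := by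
        intro i
        obtain ⟨a⟩ := hne i
        have h : x * v ⟨i, a⟩ = S - T i := hkey ⟨i, a⟩
        have hvci : v ⟨i, a⟩ = c i := hvc ⟨i, a⟩
        rw [hvci, hTc i] at h
        linarith
      obtain ⟨y0, hy0⟩ : ∃ y, v y ≠ 0 := by
        by_contra h
        push_neg at h
        exact hv (funext fun y => h y)
      have hci0 : c y0.1 ≠ 0 := by rw [← hvc y0]; exact hy0
      set i0 := y0.1
      by_cases hSz : S = 0
      · right; left
        have hxn : x = -(nn i0 : ℝ) := by
          have := heq i0
          rw [hSz, mul_eq_zero] at this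
          rcases this with h | h
          · exact absurd h hci0
          · linarith
        obtain ⟨j, hj, hcj⟩ : ∃ j, j ≠ i0 ∧ c j ≠ 0 := by
          by_contra h
          push_neg at h
          have h4 : S = (nn i0 : ℝ) * c i0 := by
            rw [hSc, Finset.sum_eq_single i0]
            · intro b _ hb
              rw [h b hb, mul_zero]
            · intro h'; exact absurd (Finset.mem_univ _) h'
          rw [hSz] at h4
          have hn : (nn i0 : ℝ) ≠ 0 :=
            Nat.cast_ne_zero.2 (Nat.one_le_iff_ne_zero.mp (hpos i0))
          rcases mul_eq_zero.mp h4.symm with h5 | h5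
          · exact hn h5
          · exact hci0 h5
        have hxnj : x = -(nn j : ℝ) := by
          have := heq j
          rw [hSz, mul_eq_zero] at this
          rcases this with h | h
          · exact absurd h hcj
          · linarith
        have hnn : nn i0 = nn j := by
          have : (nn i0 : ℝ) = (nn j : ℝ) := by linarith
          exact_mod_cast this
        exact ⟨i0, j, fun h => hj h.symm, hnn, hxn⟩
      · right; right
        have hdz : ∀ i, x + (nn i : ℝ) ≠ 0 := by
          intro i h
          apply hSz
          rw [← heq i, h, mul_zero]
        refine ⟨hdz, ?_⟩
        have hci : ∀ i, c i = S / (x + nn i) := by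
          intro i
          rw [← heq i, mul_div_assoc, div_self (hdz i), mul_one]
        have hSg : (∑ j, (nn j : ℝ) * c j) = S * gf nn x := by
          rw [gf, Finset.mul_sum]
          refine Finset.sum_congr rfl fun i _ => ?_
          rw [hci i]
          ring
        have hSg2 : S = S * gf nn x := hSc.trans hSg
        have h2 : S * gf nn x = S * 1 := by rw [mul_one]; linarith
        exact mul_left_cancel₀ hSz h2
  · rintro (⟨rfl, i0, hi0⟩ | ⟨i0, j0, hij, hnn, rfl⟩ | ⟨hdz, hg⟩)
    · -- eigenvalue 0
      set b0 : Fin (nn i0) := ⟨0, by omega⟩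
      set b1 : Fin (nn i0) := ⟨1, by omega⟩
      have h0 : b0 ≠ b1 := Fin.ne_of_val_ne (by norm_num)
      set a0 : Σ i : Fin p, Fin (nn i) := ⟨i0, b0⟩
      set a1 : Σ i : Fin p, Fin (nn i) := ⟨i0, b1⟩
      have hne01 : a0 ≠ a1 := by
        intro h
        exact h0 (eq_of_heq (Sigma.mk.inj_iff.mp h).2)
      refine ⟨Pi.single a0 1 - Pi.single a1 1, ?_, ?_⟩
      · intro h
        have := congrFun h a0
        simp [Pi.single_apply, hne01] at this
      · rw [Matrix.mulVec_sub]
        funext y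
        simp only [Matrix.mulVec_single, Pi.sub_apply, zero_smul, Pi.zero_apply, mul_one]
        simp [Mp, a0, a1]
    · -- eigenvalue -(nn i0), repeated size
      set u : Fin p → ℝ := fun i => if i = i0 then 1 else if i = j0 then -1 else 0 with hu
      have hui0 : u i0 = 1 := by simp [hu]
      have huj0 : u j0 = -1 := by simp [hu, Ne.symm hij]
      refine ⟨fun y => u y.1, ?_, ?_⟩
      · intro h
        obtain ⟨a⟩ := hne i0
        have h5 : u i0 = 0 := congrFun h ⟨i0, a⟩
        rw [hui0] at h5
        norm_num at h5
      · funext y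
        rw [mulVec_Mp]
        have hT : ∀ i : Fin p, (∑ _a : Fin (nn i), u i) = (nn i : ℝ) * u i := by
          intro i
          rw [Finset.sum_const, Finset.card_univ, Fintype.card_fin, nsmul_eq_mul]
        have hS : (∑ j, (nn j : ℝ) * u j) = 0 := by
          have hsub : ({i0, j0} : Finset (Fin p)) ⊆ Finset.univ := Finset.subset_univ _
          rw [← Finset.sum_subset hsub]
          · rw [Finset.sum_pair hij, hui0, huj0, hnn]
            ring
          · intro i _ hi
            simp only [Finset.mem_insert, Finset.mem_singleton, not_or] at hi
            have : u i = 0 := by simp [hu, hi.1, hi.2]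
            rw [this, mul_zero]
        simp only [hT]
        rw [hS]
        simp only [Pi.smul_apply, smul_eq_mul]
        by_cases h1 : y.1 = i0
        · rw [h1, hui0]; ring
        · by_cases h2 : y.1 = j0
          · rw [h2, huj0, hnn]; ring
          · have : u y.1 = 0 := by simp [hu, h1, h2]
            rw [this]; ring
    · -- root of g
      refine ⟨fun y => 1 / (x + nn y.1), ?_, ?_⟩
      · intro h
        obtain ⟨i⟩ : Nonempty (Fin p) := ⟨⟨0, lt_of_lt_of_le two_pos hp⟩⟩
        obtain ⟨a⟩ := hne i
        have := congrFun h ⟨i, a⟩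
        exact one_div_ne_zero (hdz i) this
      · funext y
        rw [mulVec_Mp]
        have hT : ∀ i : Fin p, (∑ _a : Fin (nn i), 1 / (x + (nn i : ℝ)))
            = (nn i : ℝ) / (x + nn i) := by
          intro i
          rw [Finset.sum_const, Finset.card_univ, Fintype.card_fin, nsmul_eq_mul]
          ring
        simp only
        rw [Finset.sum_congr rfl (fun j _ => hT j)]
        have hg1 : (∑ j, (nn j : ℝ) / (x + nn j)) = 1 := hg
        rw [hg1, hT y.1]
        simp only [Pi.smul_apply, smul_eq_mul]
        have h := hdz y.1
        field_simp
        ring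

lemma gf_continuousOn {s : Set ℝ} (h : ∀ x ∈ s, ∀ i, x + (nn i : ℝ) ≠ 0) :
    ContinuousOn (gf nn) s := by
  apply continuousOn_finset_sum
  intro i _
  exact continuousOn_const.div ((continuous_id.add continuous_const).continuousOn)
    (fun x hx => h x hx i)

lemma ivt_pos (hp : 2 ≤ p) (hpos : ∀ i, 1 ≤ nn i) :
    ∃ x : ℝ, 0 < x ∧ (∀ i, x + (nn i : ℝ) ≠ 0) ∧ gf nn x = 1 := by
  have hc : ∀ i, (1 : ℝ) ≤ (nn i : ℝ) := fun i => by exact_mod_cast hpos i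
  set N : ℝ := (∑ i, (nn i : ℝ)) + 1 with hN
  have hsum0 : (0 : ℝ) ≤ ∑ i, (nn i : ℝ) :=
    Finset.sum_nonneg fun i _ => by positivity
  have hN1 : 1 ≤ N := by rw [hN]; linarith
  have hNpos : 0 < N := by linarith
  have hden : ∀ x ∈ Set.Icc (0:ℝ) N, ∀ i, x + (nn i : ℝ) ≠ 0 := by
    intro x hx i
    have := hc i
    have := hx.1
    positivity
  have hcont : ContinuousOn (gf nn) (Set.Icc 0 N) := gf_continuousOn nn hden
  have hg0 : gf nn 0 = (p : ℝ) := by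
    rw [gf]
    rw [Finset.sum_congr rfl (fun i _ => by
      rw [zero_add, div_self (by linarith [hc i] : (nn i : ℝ) ≠ 0)])]
    simp
  have hgN : gf nn N < 1 := by
    have hterm : ∀ i ∈ Finset.univ, (nn i : ℝ) / (N + nn i) ≤ (nn i : ℝ) / N := by
      intro i _
      apply div_le_div_of_nonneg_left (by linarith [hc i]) hNpos
      linarith [hc i]
    calc gf nn N ≤ ∑ i, (nn i : ℝ) / N := Finset.sum_le_sum hterm
      _ = (∑ i, (nn i : ℝ)) / N := by rw [Finset.sum_div]
      _ < 1 := by rw [div_lt_one hNpos]; linarith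
  have hp2 : (2 : ℝ) ≤ (p : ℝ) := by exact_mod_cast hp
  have h1mem : (1 : ℝ) ∈ Set.Icc (gf nn N) (gf nn 0) := by
    constructor
    · linarith
    · rw [hg0]; linarith
  obtain ⟨x, hxmem, hgx⟩ := intermediate_value_Icc' (by linarith : (0:ℝ) ≤ N) hcont h1mem
  refine ⟨x, ?_, hden x hxmem, hgx⟩
  rcases lt_or_eq_of_le hxmem.1 with h | h
  · exact h
  · exfalso
    rw [← h] at hgx
    rw [hg0] at hgx
    linarith

set_option maxHeartbeats 1000000 in
lemma ivt_mid (hpos : ∀ i, 1 ≤ nn i) {a b : ℕ} (ia ib : Fin p)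
    (hia : nn ia = a) (hib : nn ib = b) (hab : a < b)
    (hgap : ∀ i, nn i ≤ a ∨ b ≤ nn i) :
    ∃ x : ℝ, -(b : ℝ) < x ∧ x < -(a : ℝ) ∧ (∀ i, x + (nn i : ℝ) ≠ 0) ∧ gf nn x = 1 := by
  have hc : ∀ i, (1 : ℝ) ≤ (nn i : ℝ) := fun i => by exact_mod_cast hpos i
  have ha1 : (1 : ℝ) ≤ (a : ℝ) := by rw [← hia]; exact hc ia
  have hb1 : (1 : ℝ) ≤ (b : ℝ) := by rw [← hib]; exact hc ib
  have hba : (a : ℝ) + 1 ≤ (b : ℝ) := by exact_mod_cast hab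
  set C : ℝ := ∑ i, 2 * (nn i : ℝ) with hC
  have hC0 : 0 ≤ C := Finset.sum_nonneg fun i _ => by positivity
  set ε : ℝ := min 4⁻¹ ((a : ℝ) / (C + 1)) with hε
  set δ : ℝ := min 4⁻¹ ((b : ℝ) / (C + 2)) with hδ
  have hε0 : 0 < ε := lt_min (by norm_num) (by positivity)
  have hδ0 : 0 < δ := lt_min (by norm_num) (by positivity)
  have hε4 : ε ≤ 4⁻¹ := min_le_left _ _
  have hδ4 : δ ≤ 4⁻¹ := min_le_left _ _
  have hεa : ε ≤ (a : ℝ) / (C + 1) := min_le_right _ _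
  have hδb : δ ≤ (b : ℝ) / (C + 2) := min_le_right _ _
  set x1 : ℝ := -(b : ℝ) + δ with hx1
  set x2 : ℝ := -(a : ℝ) - ε with hx2
  have hx12 : x1 ≤ x2 := by rw [hx1, hx2]; linarith
  have hlow : ∀ x ∈ Set.Icc x1 x2, ∀ i, nn i ≤ a → x + (nn i : ℝ) ≤ -ε := by
    intro x hx i hi
    have : (nn i : ℝ) ≤ (a : ℝ) := by exact_mod_cast hi
    have := hx.2
    rw [hx2] at this
    linarith
  have hhigh : ∀ x ∈ Set.Icc x1 x2, ∀ i, b ≤ nn i → δ ≤ x + (nn i : ℝ) := by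
    intro x hx i hi
    have : (b : ℝ) ≤ (nn i : ℝ) := by exact_mod_cast hi
    have := hx.1
    rw [hx1] at this
    linarith
  have hden : ∀ x ∈ Set.Icc x1 x2, ∀ i, x + (nn i : ℝ) ≠ 0 := by
    intro x hx i
    rcases hgap i with h | h
    · have := hlow x hx i h; intro h'; rw [h'] at this; linarith
    · have := hhigh x hx i h; intro h'; rw [h'] at this; linarith
  have hcont : ContinuousOn (gf nn) (Set.Icc x1 x2) := gf_continuousOn nn hden
  have hx1mem : x1 ∈ Set.Icc x1 x2 := ⟨le_refl _, hx12⟩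
  have hx2mem : x2 ∈ Set.Icc x1 x2 := ⟨hx12, le_refl _⟩
  -- erase sums bounded by C
  have heraseC : ∀ j : Fin p, ∑ i ∈ Finset.univ.erase j, 2 * (nn i : ℝ) ≤ C := by
    intro j
    rw [hC]
    apply Finset.sum_le_sum_of_subset_of_nonneg (Finset.subset_univ _)
    intro i _ _
    positivity
  -- lower bound at x1
  have hgx1 : 2 ≤ gf nn x1 := by
    rw [gf, ← Finset.add_sum_erase _ _ (Finset.mem_univ ib)]
    have h1 : x1 + (nn ib : ℝ) = δ := by rw [hx1, hib]; ring
    rw [h1, hib]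
    have hbδ : C + 2 ≤ (b : ℝ) / δ := by
      rw [le_div_iff₀ hδ0]
      rw [le_div_iff₀ (by linarith : (0:ℝ) < C + 2)] at hδb
      linarith
    have hrest : -C ≤ ∑ i ∈ Finset.univ.erase ib, (nn i : ℝ) / (x1 + nn i) := by
      have : ∀ i ∈ Finset.univ.erase ib, -(2 * (nn i : ℝ)) ≤ (nn i : ℝ) / (x1 + nn i) := by
        intro i _
        rcases hgap i with h | h
        · have ht : x1 + (nn i : ℝ) ≤ -(3/4 : ℝ) := by
            have h2 : (nn i : ℝ) ≤ (a : ℝ) := by exact_mod_cast h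
            rw [hx1]; linarith
          rw [le_div_iff_of_neg (by linarith : x1 + (nn i : ℝ) < 0)]
          nlinarith [hc i]
        · have ht := hhigh x1 hx1mem i h
          have : 0 ≤ (nn i : ℝ) / (x1 + nn i) := div_nonneg (by linarith [hc i]) (by linarith)
          nlinarith [hc i]
      calc -C ≤ -(∑ i ∈ Finset.univ.erase ib, 2 * (nn i : ℝ)) := neg_le_neg (heraseC ib)
        _ = ∑ i ∈ Finset.univ.erase ib, -(2 * (nn i : ℝ)) := by rw [Finset.sum_neg_distrib]
        _ ≤ _ := Finset.sum_le_sum this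
    linarith
  -- upper bound at x2
  have hgx2 : gf nn x2 ≤ -1 := by
    rw [gf, ← Finset.add_sum_erase _ _ (Finset.mem_univ ia)]
    have h1 : x2 + (nn ia : ℝ) = -ε := by rw [hx2, hia]; ring
    rw [h1, hia]
    have haε : C + 1 ≤ (a : ℝ) / ε := by
      rw [le_div_iff₀ hε0]
      rw [le_div_iff₀ (by linarith : (0:ℝ) < C + 1)] at hεa
      linarith
    have hterm1 : (a : ℝ) / -ε ≤ -(C + 1) := by
      rw [div_neg]
      linarith
    have hrest : ∑ i ∈ Finset.univ.erase ia, (nn i : ℝ) / (x2 + nn i) ≤ C := by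
      have hb' : ∀ i ∈ Finset.univ.erase ia, (nn i : ℝ) / (x2 + nn i) ≤ 2 * (nn i : ℝ) := by
        intro i _
        rcases hgap i with h | h
        · have ht := hlow x2 hx2mem i h
          have : (nn i : ℝ) / (x2 + nn i) ≤ 0 :=
            div_nonpos_of_nonneg_of_nonpos (by linarith [hc i]) (by linarith)
          nlinarith [hc i]
        · have h2 : (b : ℝ) ≤ (nn i : ℝ) := by exact_mod_cast h
          have ht : (3/4 : ℝ) ≤ x2 + (nn i : ℝ) := by rw [hx2]; linarith
          rw [div_le_iff₀ (by linarith : (0:ℝ) < x2 + (nn i : ℝ))]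
          nlinarith [hc i]
      calc ∑ i ∈ Finset.univ.erase ia, (nn i : ℝ) / (x2 + nn i)
            ≤ ∑ i ∈ Finset.univ.erase ia, 2 * (nn i : ℝ) := Finset.sum_le_sum hb'
        _ ≤ C := heraseC ia
    linarith
  have h1mem : (1 : ℝ) ∈ Set.Icc (gf nn x2) (gf nn x1) := ⟨by linarith, by linarith⟩
  obtain ⟨x, hxmem, hgx⟩ := intermediate_value_Icc' hx12 hcont h1mem
  refine ⟨x, ?_, ?_, hden x hxmem, hgx⟩
  · have := hxmem.1; rw [hx1] at this; linarith
  · have := hxmem.2; rw [hx2] at this; linarith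

lemma card_eq_three_of {s : Finset ℝ} {x y z : ℝ}
    (h : ∀ w, w ∈ s ↔ w = x ∨ w = y ∨ w = z) (hxy : x ≠ y) (hxz : x ≠ z) (hyz : y ≠ z) :
    s.card = 3 := by
  have hs : s = {x, y, z} := Finset.ext fun w => by
    rw [h w]; simp [Finset.mem_insert]
  rw [hs, Finset.card_insert_of_notMem (by simp [hxy, hxz]),
    Finset.card_insert_of_notMem (by simp [hyz]), Finset.card_singleton]

lemma card_eq_two_of {s : Finset ℝ} {x y : ℝ}
    (h : ∀ w, w ∈ s ↔ w = x ∨ w = y) (hxy : x ≠ y) : s.card = 2 := by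
  have hs : s = {x, y} := Finset.ext fun w => by rw [h w]; simp [Finset.mem_insert]
  rw [hs, Finset.card_insert_of_notMem (by simp [hxy]), Finset.card_singleton]

lemma spec_allones (hp : 2 ≤ p) (hall : ∀ i, nn i = 1) (x : ℝ) :
    Pspec nn x ↔ x = (p : ℝ) - 1 ∨ x = -1 := by
  have hi0 : (0 : ℕ) < p := by omega
  have hi1 : (1 : ℕ) < p := by omega
  set i0 : Fin p := ⟨0, hi0⟩
  set i1 : Fin p := ⟨1, hi1⟩
  have hne01 : i0 ≠ i1 := by simp [i0, i1, Fin.ext_iff]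
  have hcast : ∀ i : Fin p, (nn i : ℝ) = 1 := fun i => by rw [hall i]; norm_num
  constructor
  · rintro (⟨rfl, i, hi⟩ | ⟨i, j, hij, hnn, rfl⟩ | ⟨hdz, hg⟩)
    · rw [hall i] at hi; omega
    · right; rw [hcast i]
    · left
      have hx1 : x + 1 ≠ 0 := by have := hdz i0; rwa [hcast i0] at this
      have hgf : gf nn x = (p : ℝ) * (1 / (x + 1)) := by
        rw [gf, Finset.sum_congr rfl fun i _ => by rw [hcast i],
          Finset.sum_const, Finset.card_univ, Fintype.card_fin, nsmul_eq_mul]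
      rw [hgf] at hg
      field_simp at hg
      linarith
  · rintro (rfl | rfl)
    · right; right
      have hp0 : (0:ℝ) < (p:ℝ) := by positivity
      constructor
      · intro i; rw [hcast i]; intro h; linarith
      · rw [gf, Finset.sum_congr rfl fun i _ => by rw [hcast i],
          Finset.sum_const, Finset.card_univ, Fintype.card_fin, nsmul_eq_mul]
        have : (p:ℝ) - 1 + 1 = (p:ℝ) := by ring
        rw [this]
        field_simp
    · right; left
      exact ⟨i0, i1, hne01, by rw [hall, hall], by rw [hcast i0]⟩

lemma spec_equal (hp : 3 ≤ p) {t : ℕ} (ht : 2 ≤ t) (hall : ∀ i, nn i = t) (x : ℝ) :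
    Pspec nn x ↔ x = ((p : ℝ) - 1) * t ∨ x = 0 ∨ x = -(t : ℝ) := by
  have hi0 : (0 : ℕ) < p := by omega
  have hi1 : (1 : ℕ) < p := by omega
  set i0 : Fin p := ⟨0, hi0⟩
  set i1 : Fin p := ⟨1, hi1⟩
  have hne01 : i0 ≠ i1 := by simp [i0, i1, Fin.ext_iff]
  have hcast : ∀ i : Fin p, (nn i : ℝ) = (t : ℝ) := fun i => by rw [hall i]
  have ht0 : (0:ℝ) < (t:ℝ) := by positivity
  have ht2 : (2:ℝ) ≤ (t:ℝ) := by exact_mod_cast ht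
  have hp3 : (3:ℝ) ≤ (p:ℝ) := by exact_mod_cast hp
  constructor
  · rintro (⟨rfl, i, hi⟩ | ⟨i, j, hij, hnn, rfl⟩ | ⟨hdz, hg⟩)
    · right; left; rfl
    · right; right; rw [hcast i]
    · left
      have hxt : x + t ≠ 0 := by have := hdz i0; rwa [hcast i0] at this
      have hgf : gf nn x = (p : ℝ) * ((t : ℝ) / (x + t)) := by
        rw [gf, Finset.sum_congr rfl fun i _ => by rw [hcast i],
          Finset.sum_const, Finset.card_univ, Fintype.card_fin, nsmul_eq_mul]
      rw [hgf] at hg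
      field_simp at hg
      linarith
  · rintro (rfl | rfl | rfl)
    · right; right
      have hkey : ((p:ℝ) - 1) * t + t = (p:ℝ) * t := by ring
      have hpt : (0:ℝ) < (p:ℝ) * t := by positivity
      constructor
      · intro i; rw [hcast i, hkey]; linarith
      · rw [gf, Finset.sum_congr rfl fun i _ => by rw [hcast i, hkey],
          Finset.sum_const, Finset.card_univ, Fintype.card_fin, nsmul_eq_mul]
        field_simp
    · left
      exact ⟨rfl, i0, by rw [hall i0]; omega⟩
    · right; left
      exact ⟨i0, i1, hne01, by rw [hall, hall], by rw [hcast i0]⟩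

lemma spec_bipartite (nn : Fin 2 → ℕ) (hpos : ∀ i, 1 ≤ nn i) (hne1 : ¬∀ i, nn i = 1) (x : ℝ) :
    Pspec nn x ↔ x = Real.sqrt (nn 0 * nn 1) ∨ x = 0 ∨ x = -Real.sqrt (nn 0 * nn 1) := by
  set a : ℝ := (nn 0 : ℝ) with ha
  set b : ℝ := (nn 1 : ℝ) with hb
  have ha1 : 1 ≤ a := by rw [ha]; exact_mod_cast hpos 0
  have hb1 : 1 ≤ b := by rw [hb]; exact_mod_cast hpos 1
  have hab1 : 1 ≤ a * b := by nlinarith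
  set r : ℝ := Real.sqrt ((nn 0 : ℝ) * (nn 1 : ℝ)) with hr
  have hr0 : 0 ≤ r := by rw [hr]; exact Real.sqrt_nonneg _
  have hrab : r ^ 2 = a * b := by
    rw [hr, sq, Real.mul_self_sqrt (by positivity)]
  have hr1 : 1 ≤ r := by nlinarith
  have hgf2 : ∀ y : ℝ, gf nn y = a / (y + a) + b / (y + b) := fun y => by
    rw [gf, Fin.sum_univ_two]
  have hra_of : nn 0 = nn 1 → r = a := by
    intro heq
    rw [hr, show ((nn 1 : ℕ) : ℝ) = ((nn 0 : ℕ) : ℝ) from by rw [heq],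
      Real.sqrt_mul_self (by positivity)]
  constructor
  · rintro (⟨rfl, i, hi⟩ | ⟨i, j, hij, hnn, rfl⟩ | ⟨hdz, hg⟩)
    · right; left; rfl
    · right; right
      have h01 : nn 0 = nn 1 := by fin_cases i <;> fin_cases j <;> simp_all
      have hi0 : nn i = nn 0 := by fin_cases i <;> simp_all
      rw [hi0, ← ha, hra_of h01]
    · have hd0 : x + a ≠ 0 := hdz 0
      have hd1 : x + b ≠ 0 := hdz 1
      rw [hgf2] at hg
      have hx2 : x ^ 2 = a * b := by
        field_simp at hg
        nlinarith [hg]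
      have : (x - r) * (x + r) = 0 := by nlinarith
      rcases mul_eq_zero.mp this with h | h
      · left; linarith
      · right; right; linarith
  · rintro (rfl | rfl | rfl)
    · right; right
      have h0 : r + a ≠ 0 := by positivity
      have h1 : r + b ≠ 0 := by positivity
      refine ⟨?_, ?_⟩
      · intro i; fin_cases i
        · exact h0
        · exact h1
      · rw [hgf2]
        field_simp
        nlinarith
    · left
      refine ⟨rfl, ?_⟩
      push_neg at hne1
      obtain ⟨i, hi⟩ := hne1
      exact ⟨i, by have := hpos i; omega⟩
    · by_cases heq : nn 0 = nn 1
      · right; left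
        exact ⟨0, 1, by simp [Fin.ext_iff], heq, by rw [← ha, hra_of heq]⟩
      · right; right
        have hreq : r ≠ a := by
          intro h
          apply heq
          have hba : a * b = a * a := by nlinarith
          have : b = a := by
            have ha0 : a ≠ 0 := by linarith
            field_simp at hba
            tauto
          rw [ha, hb] at this
          exact_mod_cast this.symm
        have hreqb : r ≠ b := by
          intro h
          apply heq
          have hba : a * b = b * b := by nlinarith
          have : a = b := by
            have hb0 : b ≠ 0 := by linarith
            field_simp at hba
            tauto
          rw [ha, hb] at this
          exact_mod_cast this
        have hd0 : -r + a ≠ 0 := fun h => hreq (by linarith)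
        have hd1 : -r + b ≠ 0 := fun h => hreqb (by linarith)
        refine ⟨?_, ?_⟩
        · intro i; fin_cases i
          · exact hd0
          · exact hd1
        · rw [hgf2]
          field_simp
          nlinarith

lemma four_eigen (hp : 3 ≤ p) (hpos : ∀ i, 1 ≤ nn i) (hneq : ¬∀ i j, nn i = nn j) :
    ∃ w1 w2 w3 w4 : ℝ, Pspec nn w1 ∧ Pspec nn w2 ∧ Pspec nn w3 ∧ Pspec nn w4 ∧
      w1 ≠ w2 ∧ w1 ≠ w3 ∧ w1 ≠ w4 ∧ w2 ≠ w3 ∧ w2 ≠ w4 ∧ w3 ≠ w4 := by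
  have hp2 : 2 ≤ p := by omega
  push_neg at hneq
  obtain ⟨i₀, j₀, hij₀⟩ := hneq
  set s : Finset ℕ := Finset.image nn Finset.univ with hs
  have hmem : ∀ i, nn i ∈ s := fun i => Finset.mem_image_of_mem nn (Finset.mem_univ i)
  have hsub2 : ({nn i₀, nn j₀} : Finset ℕ) ⊆ s := by
    intro m hm
    rcases Finset.mem_insert.mp hm with rfl | hm
    · exact hmem i₀
    · rw [Finset.mem_singleton.mp hm]; exact hmem j₀
  have hcard2 : 2 ≤ s.card := by
    have : ({nn i₀, nn j₀} : Finset ℕ).card = 2 := by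
      rw [Finset.card_insert_of_notMem (by simpa using hij₀), Finset.card_singleton]
    rw [← this]
    exact Finset.card_le_card hsub2
  have hsne : s.Nonempty := ⟨nn i₀, hmem i₀⟩
  set a : ℕ := s.min' hsne with hadef
  have haS : a ∈ s := s.min'_mem hsne
  obtain ⟨ia, -, hia⟩ := Finset.mem_image.mp haS
  have hs'ne : (s.erase a).Nonempty := by
    rw [← Finset.card_pos, Finset.card_erase_of_mem haS]
    omega
  set b : ℕ := (s.erase a).min' hs'ne with hbdef
  have hbS' : b ∈ s.erase a := Finset.min'_mem _ hs'ne
  have hbS : b ∈ s := Finset.mem_of_mem_erase hbS'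
  obtain ⟨ib, -, hib⟩ := Finset.mem_image.mp hbS
  have hab : a < b :=
    lt_of_le_of_ne (s.min'_le b hbS) (Ne.symm (Finset.ne_of_mem_erase hbS'))
  have hgap1 : ∀ i, nn i ≤ a ∨ b ≤ nn i := by
    intro i
    by_cases h : nn i = a
    · left; omega
    · right
      exact Finset.min'_le _ _ (Finset.mem_erase.mpr ⟨h, hmem i⟩)
  have ha1 : 1 ≤ a := hia ▸ hpos ia
  have hb2 : 2 ≤ b := by omega
  -- the three common eigenvalues
  obtain ⟨u, hu0, hudz, hug⟩ := ivt_pos nn hp2 hpos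
  obtain ⟨v, hvl, hvr, hvdz, hvg⟩ := ivt_mid nn hpos ia ib hia hib hab hgap1
  have hP0 : Pspec nn 0 := Or.inl ⟨rfl, ib, by omega⟩
  have hPu : Pspec nn u := Or.inr (Or.inr ⟨hudz, hug⟩)
  have hPv : Pspec nn v := Or.inr (Or.inr ⟨hvdz, hvg⟩)
  have ha1' : (1:ℝ) ≤ (a:ℝ) := by exact_mod_cast ha1
  have hv0 : v < 0 := by linarith
  -- fourth eigenvalue
  rcases lt_or_ge s.card 3 with hc2 | hc3
  · -- exactly two distinct sizes: a repeated size exists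
    have hs2 : s.card = 2 := le_antisymm (by omega) hcard2
    obtain ⟨i, -, j, -, hij, hnn⟩ :=
      Finset.exists_ne_map_eq_of_card_lt_of_maps_to
        (by rw [Finset.card_univ, Fintype.card_fin, hs2]; omega)
        (fun i (_ : i ∈ Finset.univ) => hmem i)
    have hPw : Pspec nn (-(nn i : ℝ)) := Or.inr (Or.inl ⟨i, j, hij, hnn, rfl⟩)
    have hseq : s = {a, b} := by
      apply (Finset.eq_of_subset_of_card_le ?_ ?_).symm
      · intro m hm
        rcases Finset.mem_insert.mp hm with rfl | hm
        · exact haS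
        · rw [Finset.mem_singleton.mp hm]; exact hbS
      · rw [hs2, Finset.card_insert_of_notMem (by simp [Nat.ne_of_lt hab]),
          Finset.card_singleton]
    have hni : nn i = a ∨ nn i = b := by
      have := hmem i
      rw [hseq] at this
      rcases Finset.mem_insert.mp this with h | h
      · left; exact h
      · right; exact Finset.mem_singleton.mp h
    have hwv : -(nn i : ℝ) ≠ v := by
      rcases hni with h | h
      · rw [h]; intro hh; rw [← hh] at hvr; linarith
      · rw [h]; intro hh; rw [← hh] at hvl; linarith
    have hw1 : (1:ℝ) ≤ (nn i : ℝ) := by exact_mod_cast hpos i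
    refine ⟨u, 0, v, -(nn i : ℝ), hPu, hP0, hPv, hPw, ?_, ?_, ?_, ?_, ?_, ?_⟩
    · linarith
    · linarith
    · linarith
    · linarith
    · linarith
    · exact fun h => hwv h.symm
  · -- at least three distinct sizes
    have hs''ne : ((s.erase a).erase b).Nonempty := by
      rw [← Finset.card_pos, Finset.card_erase_of_mem hbS', Finset.card_erase_of_mem haS]
      omega
    set c : ℕ := ((s.erase a).erase b).min' hs''ne with hcdef
    have hcS'' : c ∈ (s.erase a).erase b := Finset.min'_mem _ hs''ne
    have hcS : c ∈ s := Finset.mem_of_mem_erase (Finset.mem_of_mem_erase hcS'')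
    obtain ⟨ic, -, hic⟩ := Finset.mem_image.mp hcS
    have hbc : b < c := by
      have hle : b ≤ c :=
        Finset.min'_le _ _ (Finset.mem_of_mem_erase hcS'')
      exact lt_of_le_of_ne hle (Ne.symm (Finset.ne_of_mem_erase hcS''))
    have hgap2 : ∀ i, nn i ≤ b ∨ c ≤ nn i := by
      intro i
      by_cases h1 : nn i = a
      · left; omega
      · by_cases h2 : nn i = b
        · left; omega
        · right
          exact Finset.min'_le _ _
            (Finset.mem_erase.mpr ⟨h2, Finset.mem_erase.mpr ⟨h1, hmem i⟩⟩)
    obtain ⟨w, hwl, hwr, hwdz, hwg⟩ := ivt_mid nn hpos ib ic hib hic hbc hgap2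
    have hPw : Pspec nn w := Or.inr (Or.inr ⟨hwdz, hwg⟩)
    have hb1' : (1:ℝ) ≤ (b:ℝ) := by exact_mod_cast hb2.trans' one_le_two
    refine ⟨u, 0, v, w, hPu, hP0, hPv, hPw, ?_, ?_, ?_, ?_, ?_, ?_⟩
    · linarith
    · linarith
    · linarith
    · linarith
    · linarith
    · linarith

/-- A complete multipartite graph with `p ≥ 2` parts of positive
sizes has exactly three distinct adjacency eigenvalues iff it is complete
bipartite (not both parts singletons) or has `p ≥ 3` equal parts of size
`t ≥ 2`. -/
theorem stmt14 (p : ℕ) (hp : 2 ≤ p) (nn : Fin p → ℕ) (hpos : ∀ i, 1 ≤ nn i)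
    (G : SimpleGraph (Σ i : Fin p, Fin (nn i))) [DecidableRel G.Adj]
    (hG : ∀ a b, G.Adj a b ↔ a.1 ≠ b.1)
    (hA : (G.adjMatrix ℝ).IsHermitian) :
    (Finset.univ.image hA.eigenvalues).card = 3 ↔
      (p = 2 ∧ ¬(∀ i, nn i = 1)) ∨
        (3 ≤ p ∧ ∃ t, 2 ≤ t ∧ ∀ i, nn i = t) := by
  have hMp : G.adjMatrix ℝ = Mp nn := by
    ext y z
    by_cases h : y.1 = z.1
    · simp [Mp, h, SimpleGraph.adjMatrix_apply, hG y z]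
    · simp [Mp, h, SimpleGraph.adjMatrix_apply, hG y z]
  have key : ∀ x : ℝ, x ∈ Finset.univ.image hA.eigenvalues ↔ Pspec nn x := by
    intro x
    rw [mem_image_eigenvalues_iff hA x, hMp]
    exact eigen_iff nn hp hpos x
  have hp1R : (1:ℝ) ≤ (p:ℝ) - 1 := by
    have : (2:ℝ) ≤ (p:ℝ) := by exact_mod_cast hp
    linarith
  have hcard2_allones : (∀ i, nn i = 1) → (Finset.univ.image hA.eigenvalues).card = 2 := by
    intro hall1
    exact card_eq_two_of (fun w => (key w).trans (spec_allones nn hp hall1 w))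
      (by intro h; rw [h] at hp1R; linarith)
  constructor
  · intro hcard
    by_contra hcon
    push_neg at hcon
    obtain ⟨h1, h2⟩ := hcon
    rcases eq_or_lt_of_le hp with hp2 | hp3
    · have := hcard2_allones (h1 hp2.symm)
      omega
    · have hp3' : 3 ≤ p := hp3
      by_cases hallEq : ∀ i j, nn i = nn j
      · set t := nn ⟨0, by omega⟩ with htdef
        have hallt : ∀ i, nn i = t := fun i => hallEq i _
        by_cases ht2 : 2 ≤ t
        · obtain ⟨i, hi⟩ := h2 hp3' t ht2
          exact hi (hallt i)
        · have hall1 : ∀ i, nn i = 1 := fun i => by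
            have := hpos ⟨0, by omega⟩
            rw [hallt i]; omega
          have := hcard2_allones hall1
          omega
      · obtain ⟨w1, w2, w3, w4, P1, P2, P3, P4, d12, d13, d14, d23, d24, d34⟩ :=
          four_eigen nn hp3' hpos hallEq
        have hsub : ({w1, w2, w3, w4} : Finset ℝ) ⊆ Finset.univ.image hA.eigenvalues := by
          intro w hw
          simp only [Finset.mem_insert, Finset.mem_singleton] at hw
          rcases hw with rfl | rfl | rfl | rfl
          · exact (key _).mpr P1
          · exact (key _).mpr P2
          · exact (key _).mpr P3
          · exact (key _).mpr P4
        have hc4 : ({w1, w2, w3, w4} : Finset ℝ).card = 4 := by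
          rw [Finset.card_insert_of_notMem (by simp [d12, d13, d14]),
            Finset.card_insert_of_notMem (by simp [d23, d24]),
            Finset.card_insert_of_notMem (by simp [d34]), Finset.card_singleton]
        have := Finset.card_le_card hsub
        omega
  · rintro (⟨hp2, hne1⟩ | ⟨hp3, t, ht2, hallt⟩)
    · subst hp2
      have hr0 : 0 ≤ Real.sqrt (nn 0 * nn 1) := Real.sqrt_nonneg _
      have hab1 : (1:ℝ) ≤ (nn 0 : ℝ) * (nn 1 : ℝ) := by
        have h0 : (1:ℝ) ≤ (nn 0 : ℝ) := by exact_mod_cast hpos 0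
        have h1 : (1:ℝ) ≤ (nn 1 : ℝ) := by exact_mod_cast hpos 1
        nlinarith
      have hr2 : Real.sqrt (nn 0 * nn 1) ^ 2 = (nn 0 : ℝ) * (nn 1 : ℝ) := by
        rw [sq, Real.mul_self_sqrt (by positivity)]
      have hr1 : 1 ≤ Real.sqrt (nn 0 * nn 1) := by nlinarith
      exact card_eq_three_of (fun w => (key w).trans (spec_bipartite nn hpos hne1 w))
        (by intro h; linarith) (by intro h; linarith) (by intro h; linarith)
    · have htR : (2:ℝ) ≤ (t:ℝ) := by exact_mod_cast ht2
      have hpR : (3:ℝ) ≤ (p:ℝ) := by exact_mod_cast hp3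
      have hx1 : (2:ℝ) ≤ ((p:ℝ) - 1) * t := by nlinarith
      exact card_eq_three_of (fun w => (key w).trans (spec_equal nn hp3 ht2 hallt w))
        (by intro h; linarith) (by intro h; linarith) (by intro h; linarith)
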